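/- arXiv:1412.4074 — 5 statements merged into one kernel-verified Lean document; each statement's English description precedes it below -/
import Mathlib

section
/- Let p and q be finite lists over an arbitrary type, each containing no duplicate elements, with p ≠ q. Then the length of the longest common prefix of p and q plus the length of the longest common suffix of p and q is at most min(|p|, |q|). (This guarantees that, for a transition between two distinct acyclic traceroute paths, the unchanged initial portion and the unchanged final portion do not overlap in either path, so the changed subpaths δ_pre and δ_post are well defined.) -/
/-- The longest common prefix of two lists. -/
def longestCommonPrefix {α : Type*} [DecidableEq α] : List α → List α → List α
  | a :: as, b :: bs => if a = b then a :: longestCommonPrefix as bs else []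
  | _, _ => []

/-- The longest common suffix of two lists: the reverse of the longest common
prefix of their reverses. -/
def longestCommonSuffix {α : Type*} [DecidableEq α] (p q : List α) : List α :=
  (longestCommonPrefix p.reverse q.reverse).reverse

private lemma lcp_prefix {α : Type*} [DecidableEq α] (p q : List α) :
    longestCommonPrefix p q <+: p ∧ longestCommonPrefix p q <+: q := by
  induction p generalizing q with
  | nil => simp [longestCommonPrefix]
  | cons a as ih =>
    cases q with
    | nil => simp [longestCommonPrefix]
    | cons b bs =>
      rw [longestCommonPrefix]
      split
      · rename_i h
        subst h
        exact ⟨List.cons_prefix_cons.mpr ⟨rfl, (ih bs).1⟩,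
               List.cons_prefix_cons.mpr ⟨rfl, (ih bs).2⟩⟩
      · simp

private lemma suffix_getElem {α : Type*} {l₁ l₂ : List α} (h : l₁ <:+ l₂)
    {i : ℕ} (hi : i < l₁.length) :
    l₁[i] = l₂[l₂.length - l₁.length + i]'(by
      have := h.length_le; omega) := by
  obtain ⟨t, rfl⟩ := h
  rw [List.getElem_append_right] <;> simp <;> omega

/-- If `a` is a common prefix, `b` a common suffix about `p, q`, and they overlap
in `p`, then `q` is no longer than `p`. -/
private lemma key {α : Type*} (a b p q : List α)
    (ha1 : a <+: p) (ha2 : a <+: q) (hb1 : b <:+ p) (hb2 : b <:+ q)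
    (hq : q.Nodup) (h : p.length < a.length + b.length) :
    q.length ≤ p.length := by
  have hap := ha1.length_le
  have haq := ha2.length_le
  have hbp := hb1.length_le
  have hbq := hb2.length_le
  have hb0 : 0 < b.length := by omega
  have hi : p.length - b.length < a.length := by omega
  -- b[0] sits at position p.length - b.length in p and q.length - b.length in q
  have e1 : b[0] = p[p.length - b.length]'(by omega) := by
    have := suffix_getElem hb1 hb0; simpa using this
  have e2 : b[0] = q[q.length - b.length]'(by omega) := by
    have := suffix_getElem hb2 hb0; simpa using this
  have e3 : a[p.length - b.length]'hi = p[p.length - b.length]'(by omega) :=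
    ha1.getElem hi
  have e4 : a[p.length - b.length]'hi = q[p.length - b.length]'(by omega) :=
    ha2.getElem hi
  have : q[p.length - b.length]'(by omega) = q[q.length - b.length]'(by omega) := by
    rw [← e4, e3, ← e1, e2]
  have := hq.getElem_inj_iff.mp this
  omega

private lemma eq_of_overlap {α : Type*} (a b p q : List α)
    (ha1 : a <+: p) (ha2 : a <+: q) (hb1 : b <:+ p) (hb2 : b <:+ q)
    (hlen : p.length = q.length) (h : p.length < a.length + b.length) :
    p = q := by
  have hbp := hb1.length_le
  apply List.ext_getElem hlen
  intro i h1 h2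
  rcases lt_or_ge i a.length with hi | hi
  · rw [← ha1.getElem hi, ← ha2.getElem hi]
  · have hj : i - (p.length - b.length) < b.length := by omega
    have := suffix_getElem hb1 hj
    have h' := suffix_getElem hb2 hj
    rw [this] at h'
    have ep : p.length - b.length + (i - (p.length - b.length)) = i := by omega
    have eq2 : q.length - b.length + (i - (p.length - b.length)) = i := by omega
    simp only [ep, eq2] at h'
    exact h'

/-- For finite duplicate-free lists `p ≠ q`, the length of the longest common prefix
plus the length of the longest common suffix is at most `min |p| |q|`. -/
theorem lcp_length_add_lcs_length_le_min
    {α : Type*} [DecidableEq α] (p q : List α)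
    (hp : p.Nodup) (hq : q.Nodup) (hne : p ≠ q) :
    (longestCommonPrefix p q).length + (longestCommonSuffix p q).length ≤
      min p.length q.length := by
  set a := longestCommonPrefix p q with ha
  set b := longestCommonSuffix p q with hb
  have ha1 : a <+: p := (lcp_prefix p q).1
  have ha2 : a <+: q := (lcp_prefix p q).2
  have hb1 : b <:+ p := by
    rw [hb, longestCommonSuffix]
    exact List.reverse_prefix.mp (by simpa using (lcp_prefix p.reverse q.reverse).1)
  have hb2 : b <:+ q := by
    rw [hb, longestCommonSuffix]
    exact List.reverse_prefix.mp (by simpa using (lcp_prefix p.reverse q.reverse).2)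
  by_contra hcon
  push_neg at hcon
  rw [min_lt_iff] at hcon
  have h1 : p.length < a.length + b.length := by
    rcases hcon with h | h
    · exact h
    · have := key a b q p ha2 ha1 hb2 hb1 hp h; omega
  have hqp := key a b p q ha1 ha2 hb1 hb2 hq h1
  have hpq := key a b q p ha2 ha1 hb2 hb1 hp (by omega)
  exact hne (eq_of_overlap a b p q ha1 ha2 hb1 hb2 (le_antisymm hpq hqp) h1)
end

section
/- Let p and q be finite lists over an arbitrary type, each containing no duplicate elements, with p ≠ q. Then the length of the longest common prefix of p and q plus the length of the longest common suffix of p and q is strictly less than max(|p|, |q|). (Hence in any transition at least the longer of the two traceroute paths has a nonempty changed portion.) -/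
theorem lcp_prefix_left {α : Type*} [DecidableEq α] :
    ∀ p q : List α, longestCommonPrefix p q <+: p
  | [], _ => by simp [longestCommonPrefix]
  | _ :: _, [] => by simp [longestCommonPrefix]
  | a :: as, b :: bs => by
    simp only [longestCommonPrefix]
    split
    · obtain ⟨t, ht⟩ := lcp_prefix_left as bs
      exact ⟨t, by simp [ht]⟩
    · exact List.nil_prefix

theorem lcp_prefix_right {α : Type*} [DecidableEq α] :
    ∀ p q : List α, longestCommonPrefix p q <+: q
  | [], _ => by simp [longestCommonPrefix]
  | _ :: _, [] => by simp [longestCommonPrefix]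
  | a :: as, b :: bs => by
    simp only [longestCommonPrefix]
    split
    · obtain ⟨t, ht⟩ := lcp_prefix_right as bs
      rename_i h
      exact ⟨t, by simp [ht, h]⟩
    · exact List.nil_prefix

theorem lcs_suffix_left {α : Type*} [DecidableEq α] (p q : List α) :
    longestCommonSuffix p q <:+ p := by
  have := lcp_prefix_left p.reverse q.reverse
  rw [longestCommonSuffix]
  have h2 := this.reverse
  simpa using h2

theorem lcs_suffix_right {α : Type*} [DecidableEq α] (p q : List α) :
    longestCommonSuffix p q <:+ q := by
  have := lcp_prefix_right p.reverse q.reverse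
  rw [longestCommonSuffix]
  have h2 := this.reverse
  simpa using h2

theorem lcp_append_singleton {α : Type*} [DecidableEq α] (a : α) :
    ∀ x y : List α, a ∉ x → a ∉ y → x ≠ y →
      longestCommonPrefix (x ++ [a]) (y ++ [a]) = longestCommonPrefix x y
  | [], [], _, _, hne => absurd rfl hne
  | [], b :: ys, hx, hy, _ => by
    simp only [List.nil_append, List.cons_append, longestCommonPrefix]
    rw [if_neg]
    intro h; exact hy (h ▸ List.mem_cons_self)
  | b :: xs, [], hx, hy, _ => by
    simp only [List.nil_append, List.cons_append, longestCommonPrefix]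
    rw [if_neg]
    intro h; exact hx (h ▸ List.mem_cons_self)
  | b :: xs, c :: ys, hx, hy, hne => by
    simp only [List.cons_append, longestCommonPrefix]
    split
    · rename_i h
      subst h
      have := lcp_append_singleton a xs ys (fun h => hx (List.mem_cons_of_mem _ h))
        (fun h => hy (List.mem_cons_of_mem _ h)) (fun h => hne (by rw [h]))
      rw [this]
    · rfl

theorem lcs_cons_cons {α : Type*} [DecidableEq α] (a : α) (as bs : List α)
    (ha : a ∉ as) (hb : a ∉ bs) (hne : as ≠ bs) :
    longestCommonSuffix (a :: as) (a :: bs) = longestCommonSuffix as bs := by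
  simp only [longestCommonSuffix, List.reverse_cons]
  rw [lcp_append_singleton a as.reverse bs.reverse (by simpa) (by simpa)
    (fun h => hne (by simpa using congrArg List.reverse h))]

/-- For finite duplicate-free lists `p ≠ q`, the length of the longest common prefix
plus the length of the longest common suffix is strictly less than `max |p| |q|`. -/
theorem lcp_length_add_lcs_length_lt_max
    {α : Type*} [DecidableEq α] (p q : List α)
    (hp : p.Nodup) (hq : q.Nodup) (hne : p ≠ q) :
    (longestCommonPrefix p q).length + (longestCommonSuffix p q).length <
      max p.length q.length := by
  induction p generalizing q with
  | nil =>
    cases q with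
    | nil => exact absurd rfl hne
    | cons b bs =>
      simp [longestCommonPrefix, longestCommonSuffix]
  | cons a as ih =>
    cases q with
    | nil =>
      have h1 : longestCommonPrefix (a :: as) ([] : List α) = [] := rfl
      have h2 : longestCommonSuffix (a :: as) ([] : List α) = [] := by
        have := lcs_suffix_right (a :: as) ([] : List α)
        simpa using List.eq_nil_of_suffix_nil this
      simp [h1, h2]
    | cons b bs =>
      by_cases hab : a = b
      · subst hab
        have ha : a ∉ as := by simp at hp; exact hp.1
        have hb : a ∉ bs := by simp at hq; exact hq.1
        have hne' : as ≠ bs := fun h => hne (by rw [h])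
        have hlcp : longestCommonPrefix (a :: as) (a :: bs)
            = a :: longestCommonPrefix as bs := by
          simp [longestCommonPrefix]
        rw [hlcp, lcs_cons_cons a as bs ha hb hne']
        have := ih bs (List.Nodup.of_cons hp) (List.Nodup.of_cons hq) hne'
        simp only [List.length_cons]
        omega
      · -- lcp = [], bound lcs
        have hlcp : longestCommonPrefix (a :: as) (b :: bs) = [] := by
          simp [longestCommonPrefix, hab]
        rw [hlcp]
        have h1 : (longestCommonSuffix (a :: as) (b :: bs)).length ≤ (a :: as).length :=
          (lcs_suffix_left _ _).length_le
        have h2 : (longestCommonSuffix (a :: as) (b :: bs)).length ≤ (b :: bs).length :=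
          (lcs_suffix_right _ _).length_le
        by_contra hcon
        push_neg at hcon
        rw [List.length_nil, zero_add] at hcon
        have hS1 : (a :: as).length ≤ (longestCommonSuffix (a :: as) (b :: bs)).length :=
          le_trans (le_max_left _ _) hcon
        have hS2 : (b :: bs).length ≤ (longestCommonSuffix (a :: as) (b :: bs)).length :=
          le_trans (le_max_right _ _) hcon
        have e1 : longestCommonSuffix (a :: as) (b :: bs) = a :: as :=
          (lcs_suffix_left _ _).eq_of_length (le_antisymm h1 hS1)
        have e2 : longestCommonSuffix (a :: as) (b :: bs) = b :: bs :=
          (lcs_suffix_right _ _).eq_of_length (le_antisymm h2 hS2)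
        exact hne (e1 ▸ e2)
end

section
/- Let G be a simple graph, h a vertex, and E↓ a set of edges of G each incident to h. Let (l_i)_{i ∈ S} be a family of finite lists of vertices, indexed by a nonempty finite set S, such that for every i ∈ S the list l_i contains two consecutive entries u, w with the unordered pair {u, w} belonging to E↓. Then h is an element of l_i for every i ∈ S, and for all i, j ∈ S the sets of elements of l_i and l_j have nonempty intersection. (In the paper's terminology: if every transition's changed pre-portion traverses a link of a physical down event with hub h, then the hub appears in every changed pre-portion, so all sd-pairs in the event's scope are pairwise pre-empathic.) -/
/-- If every list `l i` (the changed pre-portion of the transition of sd-pair `i`)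
contains two consecutive entries forming an edge of a physical down event `E↓` whose
edges are all incident to the hub `h`, then `h` appears in every `l i`, and the element
sets of any two of the lists intersect (all sd-pairs are pairwise pre-empathic). -/
theorem hub_mem_and_pairwise_preEmpathic
    {V : Type*} {ι : Type*} (G : SimpleGraph V) (h : V) (Edown : Set (Sym2 V))
    (hsub : Edown ⊆ G.edgeSet) (hinc : ∀ e ∈ Edown, h ∈ e)
    (S : Finset ι) (hS : S.Nonempty) (l : ι → List V)
    (hedge : ∀ i ∈ S, ∃ u w : V, [u, w] <:+: l i ∧ s(u, w) ∈ Edown) :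
    (∀ i ∈ S, h ∈ l i) ∧
    (∀ i ∈ S, ∀ j ∈ S, ({x | x ∈ l i} ∩ {x | x ∈ l j}).Nonempty) := by
  have key : ∀ i ∈ S, h ∈ l i := by
    intro i hi
    obtain ⟨u, w, hinf, he⟩ := hedge i hi
    have hm := hinc _ he
    rw [Sym2.mem_iff] at hm
    rcases hm with rfl | rfl
    · exact hinf.mem (by simp)
    · exact hinf.mem (by simp)
  exact ⟨key, fun i hi j hj => ⟨h, key i hi, key j hj⟩⟩
end

section
/- (Completeness for down events.) Let G be a simple graph, E↓ a set of edges of G all incident to a hub vertex h, and t̄ ∈ ℝ the time at which the down event E↓ occurs. Let S be a nonempty finite set of source–destination pairs and, for each i ∈ S, let the corresponding transition have activity interval [a i, b i) with a i ≤ t̄ < b i, and changed pre-portion a finite list δ_i of vertices containing two consecutive entries u, w with {u, w} ∈ E↓. Set t₁ = max_{i∈S} a i and t₂ = min_{i∈S} b i. Then t₁ ≤ t̄ < t₂; for every i ∈ S the interval [t₁, t₂) is contained in [a i, b i) (all transitions are active throughout [t₁, t₂)); and h is an element of δ_i for every i ∈ S. (Hence the algorithm constructs the candidate event (t₁, t₂,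 S, h^pre), so for every visible physical down event an inferred event containing the hub among its reported addresses is produced.) -/
/-- Completeness for down events: given a physical down event `E↓` of a simple graph `G`
with hub `h` occurring at time `t̄`, a nonempty finite scope `S` of sd-pairs whose
transitions have activity intervals `[a i, b i)` containing `t̄` and changed pre-portions
`δ i` each containing two consecutive entries forming an edge of `E↓`, the interval
`[t₁, t₂) = [max a, min b)` contains `t̄`, is contained in every activity interval, and
the hub `h` appears in every changed pre-portion `δ i`. -/
theorem completeness_down_event
    {V : Type*} {ι : Type*} (G : SimpleGraph V) (Edown : Set (Sym2 V)) (h : V)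
    (hsub : Edown ⊆ G.edgeSet) (hinc : ∀ e ∈ Edown, h ∈ e) (tbar : ℝ)
    (S : Finset ι) (hS : S.Nonempty) (a b : ι → ℝ)
    (hact : ∀ i ∈ S, a i ≤ tbar ∧ tbar < b i)
    (δ : ι → List V)
    (hedge : ∀ i ∈ S, ∃ u w : V, [u, w] <:+: δ i ∧ s(u, w) ∈ Edown) :
    S.sup' hS a ≤ tbar ∧ tbar < S.inf' hS b ∧
    (∀ i ∈ S, Set.Ico (S.sup' hS a) (S.inf' hS b) ⊆ Set.Ico (a i) (b i)) ∧
    (∀ i ∈ S, h ∈ δ i) := by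
  refine ⟨Finset.sup'_le hS a fun i hi => (hact i hi).1,
    (Finset.lt_inf'_iff hS).2 fun i hi => (hact i hi).2, fun i hi x hx => ⟨le_trans (Finset.le_sup' a hi) hx.1, lt_of_lt_of_le hx.2 (Finset.inf'_le b hi)⟩, fun i hi => ?_⟩
  obtain ⟨u, w, hinf, hmem⟩ := hedge i hi
  have hh := hinc _ hmem
  rw [Sym2.mem_iff] at hh
  rcases hh with rfl | rfl
  · exact hinf.mem (by simp)
  · exact hinf.mem (by simp)
end

section
/- (Completeness for up events.) Let G be a simple graph, E↑ a set of edges all incident to a hub vertex h, and t̄ ∈ ℝ the time at which the up event E↑ occurs. Let S be a nonempty finite set of source–destination pairs and, for each i ∈ S, let the corresponding transition have activity interval [a i, b i) with a i ≤ t̄ < b i, and changed post-portion a finite list δ'_i of vertices containing two consecutive entries u, w with {u, w} ∈ E↑. Set t₁ = max_{i∈S} a i and t₂ = min_{i∈S} b i. Then t₁ ≤ t̄ < t₂; for every i ∈ S the interval [t₁, t₂) is contained in [a i, b i); and h is an element of δ'_i for every i ∈ S. (Hence all pairs in the scope are pairwise post-empathic throughout [t₁, t₂) and the algorithm constructs the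 candidate event (t₁, t₂, S, h^post).) -/
/-- Completeness for up events: given a physical up event `E↑` (a set of edges, i.e.
unordered pairs of distinct vertices, all incident to the hub `h`) occurring at time
`t̄`, a nonempty finite scope `S` of sd-pairs whose transitions have activity intervals
`[a i, b i)` containing `t̄` and changed post-portions `δ' i` each containing two
consecutive entries forming an edge of `E↑`, the interval `[t₁, t₂) = [max a, min b)`
contains `t̄`, is contained in every activity interval, and the hub `h` appears in every
changed post-portion `δ' i`. -/
theorem completeness_up_event
    {V : Type*} {ι : Type*} (G : SimpleGraph V) (Eup : Set (Sym2 V)) (h : V)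
    (hndiag : ∀ e ∈ Eup, ¬ e.IsDiag) (hinc : ∀ e ∈ Eup, h ∈ e) (tbar : ℝ)
    (S : Finset ι) (hS : S.Nonempty) (a b : ι → ℝ)
    (hact : ∀ i ∈ S, a i ≤ tbar ∧ tbar < b i)
    (δ' : ι → List V)
    (hedge : ∀ i ∈ S, ∃ u w : V, [u, w] <:+: δ' i ∧ s(u, w) ∈ Eup) :
    S.sup' hS a ≤ tbar ∧ tbar < S.inf' hS b ∧
    (∀ i ∈ S, Set.Ico (S.sup' hS a) (S.inf' hS b) ⊆ Set.Ico (a i) (b i)) ∧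
    (∀ i ∈ S, h ∈ δ' i) := by
  have h1 : S.sup' hS a ≤ tbar := Finset.sup'_le _ _ fun i hi => (hact i hi).1
  have h2 : tbar < S.inf' hS b := (Finset.lt_inf'_iff _).2 fun i hi => (hact i hi).2
  refine ⟨h1, h2, fun i hi => Set.Ico_subset_Ico (Finset.le_sup' a hi) (Finset.inf'_le b hi),
    fun i hi => ?_⟩
  obtain ⟨u, w, hinf, hmem⟩ := hedge i hi
  have hsub : u ∈ δ' i ∧ w ∈ δ' i := by
    constructor <;> exact hinf.subset (by simp)
  have := hinc _ hmem
  rcases Sym2.mem_iff.1 this with rfl | rfl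
  · exact hsub.1
  · exact hsub.2
end
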